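/- Let m ≥ 2 and k ≥ 1. Let q₁,…,q_k ∈ S be polynomials in the Y-variables only, homogeneous of degree 2, and let A₁,…,A_k ∈ S be polynomials in the Y-variables only, homogeneous of degree m−2. Then the following are equivalent: (a) there exists B ∈ S in the Y-variables only, homogeneous of degree m, with δ(B) = ∑_{i=1}^{k} δ(qᵢ)·Aᵢ; (b) for every 0 ≤ j ≤ N: 2·∂/∂Yⱼ( ∑_{i=1}^{k} qᵢ·Aᵢ ) = m·∑_{i=1}^{k} Aᵢ·(∂qᵢ/∂Yⱼ). -/
import Mathlib


open MvPolynomial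

noncomputable section

/-- The polynomial ring `ℂ[Y₀,…,Y_N,X₀,…,X_N]`: the left copy of `Fin (N+1)` indexes the
`Y`-variables, the right copy indexes the `X`-variables. -/
abbrev S (N : ℕ) : Type := MvPolynomial (Fin (N + 1) ⊕ Fin (N + 1)) ℂ

/-- Weight giving `1` to each `Yᵢ` and `0` to each `Xᵢ`. -/
def wY (N : ℕ) : (Fin (N + 1) ⊕ Fin (N + 1)) → ℕ := Sum.elim (fun _ => 1) (fun _ => 0)

/-- Weight giving `0` to each `Yᵢ` and `1` to each `Xᵢ`. -/
def wX (N : ℕ) : (Fin (N + 1) ⊕ Fin (N + 1)) → ℕ := Sum.elim (fun _ => 0) (fun _ => 1)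

/-- `A` is bihomogeneous of bidegree `(m, n)`. -/
def Bihom (N m n : ℕ) (A : S N) : Prop :=
  A.IsWeightedHomogeneous (wY N) m ∧ A.IsWeightedHomogeneous (wX N) n

/-- The operator `δ(A) = ∑ᵢ Xᵢ · ∂A/∂Yᵢ`. -/
def deltaOp (N : ℕ) (A : S N) : S N :=
  ∑ i : Fin (N + 1), X (Sum.inr i) * pderiv (Sum.inl i) A

/-- The quadratic polynomial `q = ∑ᵢ Xᵢ·Yᵢ`. -/
def qPoly (N : ℕ) : S N := ∑ i : Fin (N + 1), X (Sum.inr i) * X (Sum.inl i)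

lemma pderiv_mem_supported {σ : Type*} {s : Set σ} {p : MvPolynomial σ ℂ}
    (hp : p ∈ supported ℂ s) (i : σ) : pderiv i p ∈ supported ℂ s := by
  rw [supported] at hp ⊢
  induction hp using Algebra.adjoin_induction with
  | mem x hx =>
    obtain ⟨j, hj, rfl⟩ := hx
    by_cases h : j = i
    · subst h; simp only [pderiv_X_self]; exact one_mem _
    · rw [pderiv_X_of_ne h]; exact zero_mem _
  | algebraMap r => rw [MvPolynomial.algebraMap_eq, pderiv_C]; exact zero_mem _
  | add x y hx hy ihx ihy => rw [map_add]; exact add_mem ihx ihy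
  | mul x y hx hy ihx ihy =>
    rw [pderiv_mul]
    exact add_mem (mul_mem ihx hy) (mul_mem hx ihy)

lemma pderiv_inr_eq_zero {N : ℕ} {p : S N} (hp : p ∈ supported ℂ
    (Set.range (Sum.inl : Fin (N + 1) → Fin (N + 1) ⊕ Fin (N + 1)))) (j : Fin (N + 1)) :
    pderiv (Sum.inr j) p = 0 := by
  apply pderiv_eq_zero_of_notMem_vars
  intro h
  rcases mem_supported.mp hp h with ⟨l, hl⟩
  exact Sum.inl_ne_inr hl

lemma weight_wY (N : ℕ) (d : (Fin (N + 1) ⊕ Fin (N + 1)) →₀ ℕ) :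
    Finsupp.weight (wY N) d = ∑ j : Fin (N + 1), d (Sum.inl j) := by
  rw [Finsupp.weight_apply, Finsupp.sum_fintype _ _ (fun i => by simp)]
  rw [Fintype.sum_sum_type]
  simp [wY]

lemma X_mul_pderiv_monomial {σ : Type*} (j : σ) (d : σ →₀ ℕ) (c : ℂ) :
    X j * pderiv j (monomial d c) = (d j) • monomial d c := by
  rw [pderiv_monomial]
  by_cases h : d j = 0
  · simp [h]
  · rw [X, monomial_mul, smul_monomial]
    congr 1
    · rw [add_comm, tsub_add_cancel_of_le]
      rwa [Finsupp.single_le_iff, Nat.one_le_iff_ne_zero]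
    · push_cast; ring

lemma euler {N n : ℕ} {p : S N} (hp : p.IsWeightedHomogeneous (wY N) n) :
    ∑ j : Fin (N + 1), X (Sum.inl j) * pderiv (Sum.inl j) p = n • p := by
  conv_lhs => rw [p.as_sum]
  simp only [map_sum, Finset.mul_sum, X_mul_pderiv_monomial]
  rw [Finset.sum_comm]
  conv_rhs => rw [p.as_sum, Finset.smul_sum]
  refine Finset.sum_congr rfl fun d hd => ?_
  rw [← Finset.sum_smul, ← weight_wY, hp (mem_support_iff.mp hd)]

lemma pderiv_inr_deltaOp {N : ℕ} {p : S N} (hp : p ∈ supported ℂ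
    (Set.range (Sum.inl : Fin (N + 1) → Fin (N + 1) ⊕ Fin (N + 1)))) (j : Fin (N + 1)) :
    pderiv (Sum.inr j) (deltaOp N p) = pderiv (Sum.inl j) p := by
  rw [deltaOp, map_sum, Finset.sum_eq_single j]
  · rw [pderiv_mul, pderiv_X_self, one_mul,
      pderiv_inr_eq_zero (pderiv_mem_supported hp _) j, mul_zero, add_zero]
  · intro l _ hl
    rw [pderiv_mul, pderiv_X_of_ne (by simp [hl]),
      zero_mul, pderiv_inr_eq_zero (pderiv_mem_supported hp _) j, mul_zero, add_zero]
  · simp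

/-- For quadratic `q₁,…,q_k` and degree-`(m−2)` polynomials `A₁,…,A_k`, all
in the `Y`-variables only: there exists `B` in the `Y`-variables only, homogeneous of degree
`m`, with `δ(B) = ∑ᵢ δ(qᵢ)·Aᵢ`, iff
`2·∂/∂Yⱼ(∑ᵢ qᵢ·Aᵢ) = m·∑ᵢ Aᵢ·∂qᵢ/∂Yⱼ` for every `j`. -/
theorem statement17 (N : ℕ) (hN : 2 ≤ N) (m k : ℕ) (hm : 2 ≤ m) (hk : 1 ≤ k)
    (Q A : Fin k → S N)
    (hQsupp : ∀ i, Q i ∈ MvPolynomial.supported ℂ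
      (Set.range (Sum.inl : Fin (N + 1) → Fin (N + 1) ⊕ Fin (N + 1))))
    (hQhom : ∀ i, (Q i).IsWeightedHomogeneous (wY N) 2)
    (hAsupp : ∀ i, A i ∈ MvPolynomial.supported ℂ
      (Set.range (Sum.inl : Fin (N + 1) → Fin (N + 1) ⊕ Fin (N + 1))))
    (hAhom : ∀ i, (A i).IsWeightedHomogeneous (wY N) (m - 2)) :
    (∃ B : S N, B ∈ MvPolynomial.supported ℂ
        (Set.range (Sum.inl : Fin (N + 1) → Fin (N + 1) ⊕ Fin (N + 1))) ∧
        B.IsWeightedHomogeneous (wY N) m ∧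
        deltaOp N B = ∑ i : Fin k, deltaOp N (Q i) * A i) ↔
      ∀ j : Fin (N + 1),
        2 * pderiv (Sum.inl j) (∑ i : Fin k, Q i * A i) =
          (m : S N) * ∑ i : Fin k, A i * pderiv (Sum.inl j) (Q i) := by
  have hm0 : (m : ℂ) ≠ 0 := Nat.cast_ne_zero.mpr (by omega)
  constructor
  · rintro ⟨B, hBsupp, hBhom, hB⟩ j
    have hD : ∀ j, pderiv (Sum.inl j) B
        = ∑ i, pderiv (Sum.inl j) (Q i) * A i := by
      intro j
      have h := congrArg (pderiv (Sum.inr j)) hB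
      rw [pderiv_inr_deltaOp hBsupp, map_sum] at h
      rw [h]
      refine Finset.sum_congr rfl fun i _ => ?_
      rw [pderiv_mul, pderiv_inr_deltaOp (hQsupp i),
        pderiv_inr_eq_zero (hAsupp i), mul_zero, add_zero]
    have hmB : m • B = 2 • ∑ i, Q i * A i := by
      rw [← euler hBhom]
      calc ∑ j, X (Sum.inl j) * pderiv (Sum.inl j) B
          = ∑ j : Fin (N + 1), ∑ i : Fin k,
              (X (Sum.inl j) * pderiv (Sum.inl j) (Q i)) * A i := by
            refine Finset.sum_congr rfl fun j _ => ?_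
            rw [hD j, Finset.mul_sum]
            exact Finset.sum_congr rfl fun i _ => (mul_assoc _ _ _).symm
        _ = ∑ i : Fin k,
              (∑ j : Fin (N + 1), X (Sum.inl j) * pderiv (Sum.inl j) (Q i)) * A i := by
            rw [Finset.sum_comm]
            exact Finset.sum_congr rfl fun i _ => (Finset.sum_mul _ _ _).symm
        _ = ∑ i : Fin k, (2 • Q i) * A i := by
            exact Finset.sum_congr rfl fun i _ => by rw [euler (hQhom i)]
        _ = 2 • ∑ i, Q i * A i := by
            rw [Finset.smul_sum]
            exact Finset.sum_congr rfl fun i _ => smul_mul_assoc _ _ _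
    have h3 : m • pderiv (Sum.inl j) B
        = 2 • pderiv (Sum.inl j) (∑ i, Q i * A i) := by
      have := congrArg (pderiv (Sum.inl j)) hmB
      rwa [map_nsmul, map_nsmul] at this
    calc (2 : S N) * pderiv (Sum.inl j) (∑ i, Q i * A i)
        = 2 • pderiv (Sum.inl j) (∑ i, Q i * A i) := by
          rw [nsmul_eq_mul]; norm_num
      _ = m • pderiv (Sum.inl j) B := h3.symm
      _ = (m : S N) * pderiv (Sum.inl j) B := nsmul_eq_mul _ _
      _ = (m : S N) * ∑ i, A i * pderiv (Sum.inl j) (Q i) := by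
          rw [hD j]
          congr 1
          exact Finset.sum_congr rfl fun i _ => mul_comm _ _
  · intro hb
    have hPsupp : (∑ i, Q i * A i) ∈ supported ℂ
        (Set.range (Sum.inl : Fin (N + 1) → Fin (N + 1) ⊕ Fin (N + 1))) :=
      Subalgebra.sum_mem _ fun i _ => mul_mem (hQsupp i) (hAsupp i)
    have hPhom : (∑ i, Q i * A i).IsWeightedHomogeneous (wY N) m := by
      rw [← mem_weightedHomogeneousSubmodule]
      refine Submodule.sum_mem _ fun i _ => ?_
      rw [mem_weightedHomogeneousSubmodule]
      have := (hQhom i).mul (hAhom i)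
      rwa [show 2 + (m - 2) = m by omega] at this
    refine ⟨((m : ℂ)⁻¹ * 2) • ∑ i, Q i * A i,
      Subalgebra.smul_mem _ hPsupp _, ?_, ?_⟩
    · intro d hd
      exact hPhom (fun h => hd (by rw [coeff_smul, h, smul_zero]))
    · have hDB : ∀ j, pderiv (Sum.inl j) (((m : ℂ)⁻¹ * 2) • ∑ i, Q i * A i)
          = ∑ i, A i * pderiv (Sum.inl j) (Q i) := by
        intro j
        rw [Derivation.map_smul]
        calc ((m : ℂ)⁻¹ * 2) • pderiv (Sum.inl j) (∑ i, Q i * A i)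
            = C (m : ℂ)⁻¹ * (2 * pderiv (Sum.inl j) (∑ i, Q i * A i)) := by
              rw [smul_eq_C_mul, map_mul, mul_assoc, map_ofNat]
          _ = C (m : ℂ)⁻¹ * ((m : S N) * ∑ i, A i * pderiv (Sum.inl j) (Q i)) := by
              rw [hb j]
          _ = (C (m : ℂ)⁻¹ * C (m : ℂ)) * ∑ i, A i * pderiv (Sum.inl j) (Q i) := by
              rw [map_natCast (C : ℂ →+* S N), mul_assoc]
          _ = ∑ i, A i * pderiv (Sum.inl j) (Q i) := by
              rw [← map_mul, inv_mul_cancel₀ hm0, map_one, one_mul]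
      rw [deltaOp]
      simp only [hDB, Finset.mul_sum, deltaOp, Finset.sum_mul]
      rw [Finset.sum_comm]
      exact Finset.sum_congr rfl fun i _ => Finset.sum_congr rfl fun j _ => by ring
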